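/- Let p be prime, m ≥ 1, and let {e₁,...,e_m} be a basis of F_{p^m} over F_p together with a trace function tr: F_{p^m} → F_p satisfying tr(e_t e_s) = δ_{ts}. Let C ⊆ F_{p^m}^N be an additive code, Λ(C) ⊆ R^{Nm} its Construction A lattice via coordinate expansion in the basis (scaled by 1/√p), and let b(λ,λ') = λ g λ'^T for a symmetric unimodular integer matrix g whose entries reduce mod p to the Gram matrix of a symmetric bilinear form β on F_{p^m}^N. Then Λ(C) is self-dual with respect to b if and only if C is self-dual with respect to β. -/

import Mathlib

open scoped BigOperators

noncomputable section

/-- Construction A lattice of an additive code over `F_{p^m}`: expand codeword coordinates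
in the basis `e`, lift the `F_p`-coefficients to integers, and scale by `1/√p`. -/
def latticeF (p m N : ℕ) [Fact p.Prime]
    (e : Module.Basis (Fin m) (ZMod p) (GaloisField p m))
    (C : Set (Fin N → GaloisField p m)) : Set (Fin N × Fin m → ℝ) :=
  { lam | ∃ c ∈ C, ∃ l : Fin N × Fin m → ℤ, ∀ x : Fin N × Fin m,
      lam x = (((e.repr (c x.1) x.2).val : ℝ) + p * l x) / Real.sqrt p }

/-- Bilinear form on `ℝ^{Nm}` given by an integer Gram matrix `g`. -/
def bForm {N m : ℕ} (g : Matrix (Fin N × Fin m) (Fin N × Fin m) ℤ)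
    (lam lam' : Fin N × Fin m → ℝ) : ℝ :=
  ∑ x, ∑ y, lam x * (g x y : ℝ) * lam' y

/-- Dual lattice with respect to `bForm g`. -/
def dualLatticeF {N m : ℕ} (g : Matrix (Fin N × Fin m) (Fin N × Fin m) ℤ)
    (Λ : Set (Fin N × Fin m → ℝ)) : Set (Fin N × Fin m → ℝ) :=
  { y | ∀ x ∈ Λ, ∃ z : ℤ, bForm g x y = z }

section Aux
variable (p m N : ℕ) [Fact p.Prime] (e : Module.Basis (Fin m) (ZMod p) (GaloisField p m))
  (g : Matrix (Fin N × Fin m) (Fin N × Fin m) ℤ)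
  (β : (Fin N → GaloisField p m) →ₗ[ZMod p] (Fin N → GaloisField p m) →ₗ[ZMod p] ZMod p)

lemma single_expand (i : Fin N) (a : GaloisField p m) :
    (Pi.single i a : Fin N → GaloisField p m) = ∑ t, e.repr a t • (Pi.single i (e t) : Fin N → GaloisField p m) := by
  have h := map_sum (LinearMap.single (ZMod p) (fun _ : Fin N => GaloisField p m) i)
    (fun t => e.repr a t • e t) Finset.univ
  simp only [map_smul, LinearMap.single_apply] at h
  rw [← h, e.sum_repr a]

lemma beta_single (hcompat : ∀ (i j : Fin N) (t s : Fin m),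
      ((g (i, t) (j, s) : ZMod p)) = β (Pi.single i (e t)) (Pi.single j (e s)))
    (i j : Fin N) (a b : GaloisField p m) :
    β (Pi.single i a) (Pi.single j b)
      = ∑ t, ∑ s, (e.repr a t) * ((g (i,t) (j,s) : ZMod p)) * (e.repr b s) := by
  rw [single_expand p m N e i a, single_expand p m N e j b]
  simp only [map_sum, map_smul, LinearMap.sum_apply, LinearMap.smul_apply, smul_eq_mul]
  rw [Finset.sum_comm]
  refine Finset.sum_congr rfl fun t _ => ?_
  rw [Finset.mul_sum]
  refine Finset.sum_congr rfl fun s _ => ?_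
  rw [hcompat]
  ring

lemma beta_expand (hcompat : ∀ (i j : Fin N) (t s : Fin m),
      ((g (i, t) (j, s) : ZMod p)) = β (Pi.single i (e t)) (Pi.single j (e s)))
    (c c' : Fin N → GaloisField p m) :
    β c c' = ∑ x : Fin N × Fin m, ∑ y : Fin N × Fin m,
      (e.repr (c x.1) x.2) * ((g x y : ZMod p)) * (e.repr (c' y.1) y.2) := by
  conv_lhs => rw [← Finset.univ_sum_single c, ← Finset.univ_sum_single c']
  simp only [map_sum, LinearMap.sum_apply]
  simp only [beta_single p m N e g β hcompat]
  simp only [Fintype.sum_prod_type]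
  rw [Finset.sum_comm]
  refine Finset.sum_congr rfl fun i _ => ?_
  rw [Finset.sum_comm]

def rr (c : Fin N → GaloisField p m) : Fin N × Fin m → ℤ :=
  fun x => ((e.repr (c x.1)) x.2).val

lemma rr_cast (c : Fin N → GaloisField p m) (x : Fin N × Fin m) :
    ((rr p m N e c x : ℤ) : ZMod p) = e.repr (c x.1) x.2 := by
  simp [rr, ZMod.natCast_val, ZMod.cast_id]

def latv (c : Fin N → GaloisField p m) (l : Fin N × Fin m → ℤ) : Fin N × Fin m → ℝ :=
  fun x => ((rr p m N e c x : ℝ) + p * l x) / Real.sqrt p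

def bint (c c' : Fin N → GaloisField p m) (l l' : Fin N × Fin m → ℤ) : ℤ :=
  ∑ x, ∑ y, (rr p m N e c x + p * l x) * g x y * (rr p m N e c' y + p * l' y)

lemma castA (hcompat : ∀ (i j : Fin N) (t s : Fin m),
      ((g (i, t) (j, s) : ZMod p)) = β (Pi.single i (e t)) (Pi.single j (e s)))
    (c c' : Fin N → GaloisField p m) (l l' : Fin N × Fin m → ℤ) :
    ((bint p m N e g c c' l l' : ℤ) : ZMod p) = β c c' := by
  rw [beta_expand p m N e g β hcompat]
  unfold bint
  push_cast [ZMod.natCast_self]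
  simp only [rr_cast, ZMod.natCast_self, zero_mul, mul_zero, add_zero, zero_add]

lemma bForm_eq (c c' : Fin N → GaloisField p m) (l l' : Fin N × Fin m → ℤ) :
    bForm g (latv p m N e c l) (latv p m N e c' l')
      = (bint p m N e g c c' l l' : ℝ) / p := by
  have hp0 : (0:ℝ) < p := by exact_mod_cast (Fact.out : p.Prime).pos
  have hsq : Real.sqrt p * Real.sqrt p = p := Real.mul_self_sqrt hp0.le
  unfold bForm bint latv
  push_cast
  rw [Finset.sum_div]
  refine Finset.sum_congr rfl fun x _ => ?_
  rw [Finset.sum_div]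
  refine Finset.sum_congr rfl fun y _ => ?_
  have hs0 : Real.sqrt p ≠ 0 := by positivity
  field_simp
  rw [Real.sq_sqrt hp0.le]; ring

lemma pair_int_iff (hcompat : ∀ (i j : Fin N) (t s : Fin m),
      ((g (i, t) (j, s) : ZMod p)) = β (Pi.single i (e t)) (Pi.single j (e s)))
    (c c' : Fin N → GaloisField p m) (l l' : Fin N × Fin m → ℤ) :
    (∃ z : ℤ, bForm g (latv p m N e c l) (latv p m N e c' l') = z) ↔ β c c' = 0 := by
  rw [bForm_eq, ← castA p m N e g β hcompat c c' l l',
    ZMod.intCast_zmod_eq_zero_iff_dvd]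
  have hp0 : (0:ℝ) < p := by exact_mod_cast (Fact.out : p.Prime).pos
  constructor
  · rintro ⟨z, hz⟩
    have : (bint p m N e g c c' l l' : ℝ) = p * z := by
      field_simp at hz; linarith [hz]
    refine ⟨z, ?_⟩
    exact_mod_cast this
  · rintro ⟨k, hk⟩
    exact ⟨k, by rw [hk]; push_cast; field_simp⟩


lemma repr_sum (a : Fin m → ZMod p) (s : Fin m) :
    e.repr (∑ t, a t • e t) s = a s := by
  simp [map_sum, Finsupp.single_apply]

lemma latv_inj (c c' : Fin N → GaloisField p m) (l l' : Fin N × Fin m → ℤ)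
    (hE : latv p m N e c l = latv p m N e c' l') : c = c' := by
  have hp0 : (0:ℝ) < p := by exact_mod_cast (Fact.out : p.Prime).pos
  have hs0 : Real.sqrt p ≠ 0 := by positivity
  have hint : ∀ x, rr p m N e c x + p * l x = rr p m N e c' x + p * l' x := by
    intro x
    have hx := congrFun hE x
    unfold latv at hx
    rw [div_eq_div_iff hs0 hs0] at hx
    have hre : (rr p m N e c x : ℝ) + p * l x = rr p m N e c' x + p * l' x :=
      mul_right_cancel₀ hs0 hx
    exact_mod_cast hre
  have hrepr : ∀ x : Fin N × Fin m, e.repr (c x.1) x.2 = e.repr (c' x.1) x.2 := by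
    intro x
    rw [← rr_cast p m N e c x, ← rr_cast p m N e c' x]
    have := hint x
    have hcast : ((rr p m N e c x + p * l x : ℤ) : ZMod p)
        = ((rr p m N e c' x + p * l' x : ℤ) : ZMod p) := by rw [this]
    push_cast [ZMod.natCast_self] at hcast
    simpa using hcast
  funext i
  apply e.repr.injective
  exact Finsupp.ext fun t => hrepr (i, t)

lemma bForm_single (hp0 : (0:ℝ) < (p:ℝ))
    (lam : Fin N × Fin m → ℝ) (x0 : Fin N × Fin m) :
    bForm g (fun x => ((0:ℝ) + p * ((Pi.single x0 1 : Fin N × Fin m → ℤ) x)) / Real.sqrt p) lam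
      = Real.sqrt p * ∑ y, (g x0 y : ℝ) * lam y := by
  have hs0 : Real.sqrt p ≠ 0 := by positivity
  have hsq : Real.sqrt p * Real.sqrt p = p := Real.mul_self_sqrt hp0.le
  unfold bForm
  rw [Finset.sum_eq_single x0]
  · rw [Finset.mul_sum]
    refine Finset.sum_congr rfl fun y _ => ?_
    simp only [Pi.single_eq_same]
    push_cast
    field_simp
    ring_nf
    rw [Real.sq_sqrt hp0.le]; ring
  · intro b _ hb
    simp [Pi.single_eq_of_ne hb]
  · simp

lemma inv_recover {N m : ℕ} (g : Matrix (Fin N × Fin m) (Fin N × Fin m) ℤ) (hg_uni : IsUnit g.det)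
    (u : Fin N × Fin m → ℝ) (z : Fin N × Fin m → ℤ)
    (hz : ∀ x0, ∑ y, (g x0 y : ℝ) * u y = (z x0 : ℝ)) :
    ∃ v : Fin N × Fin m → ℤ, ∀ x, u x = (v x : ℝ) := by
  letI := Matrix.invertibleOfIsUnitDet g hg_uni
  have hgi : (⅟g : Matrix _ _ ℤ) * g = 1 := invOf_mul_self g
  refine ⟨fun x => ∑ y, (⅟g : Matrix _ _ ℤ) x y * z y, fun x => ?_⟩
  have h1 : ((∑ y, (⅟g : Matrix _ _ ℤ) x y * z y : ℤ) : ℝ)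
      = ∑ y, ((⅟g : Matrix _ _ ℤ) x y : ℝ) * (∑ k, (g y k : ℝ) * u k) := by
    push_cast
    exact Finset.sum_congr rfl fun y _ => by rw [hz y]
  rw [h1]
  have h2 : ∀ y, ((⅟g : Matrix _ _ ℤ) x y : ℝ) * (∑ k, (g y k : ℝ) * u k)
      = ∑ k, ((⅟g : Matrix _ _ ℤ) x y : ℝ) * (g y k : ℝ) * u k := by
    intro y; rw [Finset.mul_sum]; exact Finset.sum_congr rfl fun k _ => by ring
  simp only [h2]
  rw [Finset.sum_comm]
  have h3 : ∀ k, ∑ y, ((⅟g : Matrix _ _ ℤ) x y : ℝ) * (g y k : ℝ) * u k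
      = (((⅟g * g : Matrix _ _ ℤ) x k : ℤ) : ℝ) * u k := by
    intro k
    rw [Matrix.mul_apply]
    push_cast
    rw [Finset.sum_mul]
  simp only [h3, hgi, Matrix.one_apply]
  simp

end Aux
end

theorem latticeF_self_dual_iff (p m N : ℕ) [Fact p.Prime]
    (e : Module.Basis (Fin m) (ZMod p) (GaloisField p m))
    (tr : GaloisField p m →ₗ[ZMod p] ZMod p)
    (htr : ∀ t s : Fin m, tr (e t * e s) = if t = s then 1 else 0)
    (C : AddSubgroup (Fin N → GaloisField p m))
    (g : Matrix (Fin N × Fin m) (Fin N × Fin m) ℤ)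
    (hg_symm : g.IsSymm) (hg_uni : IsUnit g.det)
    (β : (Fin N → GaloisField p m) →ₗ[ZMod p]
          (Fin N → GaloisField p m) →ₗ[ZMod p] ZMod p)
    (hβ_symm : ∀ c c', β c c' = β c' c)
    (hcompat : ∀ (i j : Fin N) (t s : Fin m),
      ((g (i, t) (j, s) : ZMod p)) = β (Pi.single i (e t)) (Pi.single j (e s))) :
    latticeF p m N e (C : Set _) = dualLatticeF g (latticeF p m N e (C : Set _)) ↔
      (C : Set _) = { c' | ∀ c ∈ C, β c c' = 0 } := by
  have hp : p.Prime := Fact.out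
  have hp0 : (0:ℝ) < p := by exact_mod_cast hp.pos
  have hs0 : Real.sqrt p ≠ 0 := by positivity
  have hmem : ∀ lam, lam ∈ latticeF p m N e (C : Set _) ↔
      ∃ c ∈ C, ∃ l, lam = latv p m N e c l := by
    intro lam
    constructor
    · rintro ⟨c, hc, l, hl⟩
      exact ⟨c, hc, l, funext fun x => by rw [hl x]; simp [latv, rr]⟩
    · rintro ⟨c, hc, l, rfl⟩
      exact ⟨c, hc, l, fun x => by simp [latv, rr]⟩
  constructor
  · intro h
    ext c'
    simp only [Set.mem_setOf_eq, SetLike.mem_coe]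
    constructor
    · intro hc' c hc
      have h1 : latv p m N e c' 0 ∈ dualLatticeF g (latticeF p m N e (C : Set _)) := by
        rw [← h]; exact (hmem _).2 ⟨c', hc', 0, rfl⟩
      have h2 := h1 (latv p m N e c 0) ((hmem _).2 ⟨c, hc, 0, rfl⟩)
      exact (pair_int_iff p m N e g β hcompat c c' 0 0).1 h2
    · intro hc'
      have h1 : latv p m N e c' 0 ∈ dualLatticeF g (latticeF p m N e (C : Set _)) := by
        intro x hx
        obtain ⟨c, hc, l, rfl⟩ := (hmem x).1 hx
        exact (pair_int_iff p m N e g β hcompat c c' l 0).2 (hc' c hc)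
      rw [← h] at h1
      obtain ⟨c'', hc'', l, hl⟩ := (hmem _).1 h1
      have : c' = c'' := latv_inj p m N e c' c'' 0 l hl
      rw [this]; exact hc''
  · intro h
    apply Set.Subset.antisymm
    · intro lam hlam
      obtain ⟨c, hc, l, rfl⟩ := (hmem lam).1 hlam
      intro x hx
      obtain ⟨c'', hc'', l'', rfl⟩ := (hmem x).1 hx
      refine (pair_int_iff p m N e g β hcompat c'' c l'' l).2 ?_
      have hcm : c ∈ { c' | ∀ c0 ∈ C, β c0 c' = 0 } := h ▸ hc
      exact hcm c'' hc''
    · intro lam hlam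
      have hzero : (0 : Fin N → GaloisField p m) ∈ C := C.zero_mem
      have hbasis : ∀ x0 : Fin N × Fin m, ∃ z : ℤ,
          Real.sqrt p * ∑ y, (g x0 y : ℝ) * lam y = z := by
        intro x0
        have heq : latv p m N e 0 (Pi.single x0 1)
            = fun x => ((0:ℝ) + p * ((Pi.single x0 1 : Fin N × Fin m → ℤ) x)) / Real.sqrt p := by
          funext x; simp [latv, rr]
        have hmemb : latv p m N e 0 (Pi.single x0 1) ∈ latticeF p m N e (C : Set _) :=
          (hmem _).2 ⟨0, hzero, _, rfl⟩
        obtain ⟨z, hz⟩ := hlam _ hmemb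
        rw [heq, bForm_single p m N g hp0 lam x0] at hz
        exact ⟨z, hz⟩
      choose zf hzf using hbasis
      have hzf' : ∀ x0, ∑ y, (g x0 y : ℝ) * (Real.sqrt p * lam y) = (zf x0 : ℝ) := by
        intro x0
        rw [← hzf x0, Finset.mul_sum]
        exact Finset.sum_congr rfl fun y _ => by ring
      obtain ⟨v, hv⟩ := inv_recover g hg_uni (fun x => Real.sqrt p * lam x) zf hzf'
      set cv : Fin N → GaloisField p m := fun i => ∑ t, ((v (i, t) : ZMod p)) • e t with hcv_def
      have hrepr_cv : ∀ x : Fin N × Fin m, e.repr (cv x.1) x.2 = ((v x : ZMod p)) := by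
        intro x
        rw [hcv_def]
        exact repr_sum p m e (fun t => ((v (x.1, t) : ZMod p))) x.2
      have hdvd : ∀ x, ∃ k : ℤ, v x = rr p m N e cv x + p * k := by
        intro x
        have hc0 : ((v x - rr p m N e cv x : ℤ) : ZMod p) = 0 := by
          push_cast
          rw [rr_cast p m N e cv x, hrepr_cv x]
          ring
        obtain ⟨k, hk⟩ := (ZMod.intCast_zmod_eq_zero_iff_dvd _ _).1 hc0
        exact ⟨k, by linarith⟩
      choose l hl using hdvd
      have hlam_eq : lam = latv p m N e cv l := by
        funext x
        have h1 : Real.sqrt p * lam x = (v x : ℝ) := hv x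
        have h2 : lam x = (v x : ℝ) / Real.sqrt p := by
          rw [eq_div_iff hs0]; rw [← h1]; ring
        rw [h2, latv, hl x]
        push_cast
        ring_nf
      have hcvC : cv ∈ (C : Set (Fin N → GaloisField p m)) := by
        rw [h]
        intro c0 hc0
        have hb := hlam _ ((hmem _).2 ⟨c0, hc0, 0, rfl⟩)
        rw [hlam_eq] at hb
        exact (pair_int_iff p m N e g β hcompat c0 cv 0 l).1 hb
      exact (hmem lam).2 ⟨cv, hcvC, l, hlam_eq⟩
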